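/- Balanced Ordinal Sum Theorem: Let G ≅ ⟨x | y⟩ be a ball with x, y and G numbers such that, as values, G − x = y − G = 1/2^p for some integer p ≥ 0 (a balanced ball of radius 1/2^p with midpoint n equal to the value of G). Let m ≥ 0 and q ≥ 0 be integers and let a be either 0 or an odd integer with 0 < a < 2^q, and suppose m + a/2^q > 0. Then for every number H whose value is m + a/2^q, G : H = n + 1/2^p − 1/2^{p+m} + a/2^{p+m+q+1}. -/

import Mathlib

/-! Combinatorial game theory (`SetTheory.PGame`, `SetTheory.Game`) has been removed from
Mathlib; the notions the statement uses are re-defined here with their old meaning. -/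

noncomputable section

section OldCGT

universe w

namespace SetTheory

/-- Pre-games, as in the old Mathlib. -/
inductive PGame : Type (w + 1)
  | mk : ∀ α β : Type w, (α → PGame) → (β → PGame) → PGame

namespace PGame

/-- The type of Left moves. -/
def LeftMoves : PGame.{w} → Type w
  | mk l _ _ _ => l

/-- The type of Right moves. -/
def RightMoves : PGame.{w} → Type w
  | mk _ r _ _ => r

/-- The Left options. -/
def moveLeft : ∀ g : PGame.{w}, LeftMoves g → PGame.{w}
  | mk _l _ L _ => L

/-- The Right options. -/
def moveRight : ∀ g : PGame.{w}, RightMoves g → PGame.{w}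
  | mk _ _r _ R => R

/-- The pair `(x ≤ y, y ≤ x)`, where `x ≤ y` holds iff no Left option `xL` of `x` has
`y ≤ xL` and no Right option `yR` of `y` has `yR ≤ x` (the old `le_iff_forall_lf`). -/
def lePair (x : PGame.{w}) : PGame.{w} → Prop × Prop :=
  PGame.rec (motive := fun _ => PGame.{w} → Prop × Prop)
    (fun _ _ _ _ IHxL IHxR y =>
      PGame.rec (motive := fun _ => Prop × Prop)
        (fun yl yr yL yR IHyL IHyR =>
          ((∀ i, ¬ (IHxL i (mk yl yr yL yR)).2) ∧ (∀ j, ¬ (IHyR j).2),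
           (∀ i, ¬ (IHyL i).1) ∧ (∀ j, ¬ (IHxR j (mk yl yr yL yR)).1)))
        y) x

instance : LE PGame.{w} := ⟨fun x y => (lePair x y).1⟩

/-- `x < y` iff `x ≤ y` and not `y ≤ x` (the old preorder's `<`). -/
instance : LT PGame.{w} := ⟨fun x y => x ≤ y ∧ ¬ y ≤ x⟩

instance : Zero PGame.{w} := ⟨mk PEmpty PEmpty PEmpty.elim PEmpty.elim⟩

instance : One PGame.{w} := ⟨mk PUnit PEmpty (fun _ => 0) PEmpty.elim⟩

/-- Negation of a pre-game. -/
def neg : PGame.{w} → PGame.{w}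
  | mk l r L R => mk r l (fun i => neg (R i)) (fun i => neg (L i))

instance : Neg PGame.{w} := ⟨neg⟩

/-- Sum of pre-games. -/
def add (x : PGame.{w}) : PGame.{w} → PGame.{w} :=
  PGame.rec (motive := fun _ => PGame.{w} → PGame.{w})
    (fun xl xr _ _ IHxL IHxR y =>
      PGame.rec (motive := fun _ => PGame.{w})
        (fun yl yr yL yR IHyL IHyR =>
          mk (xl ⊕ yl) (xr ⊕ yr) (Sum.elim (fun i => IHxL i (mk yl yr yL yR)) IHyL)
            (Sum.elim (fun i => IHxR i (mk yl yr yL yR)) IHyR))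
        y) x

instance : Add PGame.{w} := ⟨add⟩

instance : Sub PGame.{w} := ⟨fun x y => x + -y⟩

/-- Numeric pre-games. -/
def Numeric : PGame.{w} → Prop
  | mk _ _ L R => (∀ i j, L i < R j) ∧ (∀ i, Numeric (L i)) ∧ ∀ j, Numeric (R j)

/-- The pre-game `2 ^ (-n)`. -/
def powHalf : ℕ → PGame.{w}
  | 0 => 1
  | n + 1 => mk PUnit PUnit (fun _ => 0) (fun _ => powHalf n)

/-- Game equivalence, as a setoid.  `x ≈ y` iff `x ≤ y ∧ y ≤ x`; this relation is an
equivalence relation, so its equivalence closure is itself. -/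
instance setoid : Setoid PGame.{w} :=
  Relation.EqvGen.setoid (fun x y : PGame.{w} => x ≤ y ∧ y ≤ x)

end PGame

/-- Games: pre-games up to equivalence. -/
abbrev Game : Type (w + 1) := Quotient PGame.setoid.{w}

namespace Game

noncomputable instance : Zero Game.{w} := ⟨⟦0⟧⟩

noncomputable instance : Add Game.{w} := ⟨fun a b => ⟦a.out + b.out⟧⟩

noncomputable instance : Neg Game.{w} := ⟨fun a => ⟦-a.out⟧⟩

noncomputable instance : Sub Game.{w} := ⟨fun a b => ⟦a.out - b.out⟧⟩

noncomputable instance : SMul ℤ Game.{w} := ⟨zsmulRec⟩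

end Game

end SetTheory

end OldCGT

open SetTheory PGame

universe u

/-- Ordinal sum `G : H`: players may move in the base `G` (ending all play in the
subordinate) or in the subordinate `H`. -/
def ordinalSum (G : PGame.{u}) : PGame.{u} → PGame.{u}
  | ⟨yl, yr, yL, yR⟩ =>
    ⟨G.LeftMoves ⊕ yl, G.RightMoves ⊕ yr,
     Sum.elim G.moveLeft fun j => ordinalSum G (yL j),
     Sum.elim G.moveRight fun j => ordinalSum G (yR j)⟩

/-- `G ≜ H`: equivalence modulo domination.  Every Left option of `G` is `≤` some Left
option of `H`, every Left option of `H` is `≤` some Left option of `G`, every Right option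
of `G` is `≥` some Right option of `H`, and every Right option of `H` is `≥` some Right
option of `G`. -/
def EquivDom (G H : PGame) : Prop :=
  (∀ i, ∃ j, G.moveLeft i ≤ H.moveLeft j) ∧
  (∀ j, ∃ i, H.moveLeft j ≤ G.moveLeft i) ∧
  (∀ i, ∃ j, H.moveRight j ≤ G.moveRight i) ∧
  (∀ j, ∃ i, G.moveRight i ≤ H.moveRight j)

/-- The ball `⟨a | b⟩`: the game with exactly one Left option `a` and exactly one Right
option `b`. -/
def ball (a b : PGame.{u}) : PGame.{u} :=
  ⟨PUnit, PUnit, fun _ => a, fun _ => b⟩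

/-- The canonical form of a natural number: `0 ≅ ⟨ | ⟩` and `n+1 ≅ ⟨n | ⟩`. -/
def canonNat : ℕ → PGame
  | 0 => 0
  | n + 1 => ⟨PUnit, PEmpty, fun _ => canonNat n, PEmpty.elim⟩

/-- The canonical form of an integer: for `n ≥ 0` it is `canonNat n`, and the canonical
form of a negative integer is the negative of the canonical form of its absolute value. -/
def canonInt (n : ℤ) : PGame :=
  if 0 ≤ n then canonNat n.toNat else -canonNat (-n).toNat

/-- The game value of the dyadic rational `a / 2 ^ q`. -/
def dyadicVal (a : ℤ) (q : ℕ) : Game :=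
  a • (⟦powHalf q⟧ : Game)


namespace SetTheory.PGame

theorem lePair_mk {xl xr yl yr : Type u} (xL : xl → PGame.{u}) (xR : xr → PGame.{u})
    (yL : yl → PGame.{u}) (yR : yr → PGame.{u}) :
    lePair (mk xl xr xL xR) (mk yl yr yL yR) =
      ((∀ i, ¬ (lePair (xL i) (mk yl yr yL yR)).2) ∧ (∀ j, ¬ (lePair (mk xl xr xL xR) (yR j)).2),
       (∀ i, ¬ (lePair (mk xl xr xL xR) (yL i)).1) ∧ (∀ j, ¬ (lePair (xR j) (mk yl yr yL yR)).1)) :=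
  rfl

theorem lePair_swap (x : PGame.{u}) : ∀ y : PGame.{u},
    ((lePair x y).2 ↔ (lePair y x).1) ∧ ((lePair y x).2 ↔ (lePair x y).1) := by
  induction x with
  | mk xl xr xL xR IHxl IHxr =>
  intro y
  induction y with
  | mk yl yr yL yR IHyl IHyr =>
  rw [lePair_mk, lePair_mk]
  dsimp only
  exact ⟨and_congr (forall_congr' fun i => not_congr (IHyl i).2.symm)
      (forall_congr' fun j => not_congr (IHxr j _).2.symm),
    and_congr (forall_congr' fun i => not_congr (IHxl i _).1.symm)
      (forall_congr' fun j => not_congr (IHyr j).1.symm)⟩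

/-- `x ⧏ y` iff not `y ≤ x`. -/
abbrev LF (x y : PGame.{u}) : Prop := ¬ y ≤ x

infixl:50 " ⧏ " => LF

theorem le_mk_iff {xl xr yl yr : Type u} (xL : xl → PGame.{u}) (xR : xr → PGame.{u})
    (yL : yl → PGame.{u}) (yR : yr → PGame.{u}) :
    mk xl xr xL xR ≤ mk yl yr yL yR ↔
      (∀ i, ¬ mk yl yr yL yR ≤ xL i) ∧ ∀ j, ¬ yR j ≤ mk xl xr xL xR := by
  show (lePair _ _).1 ↔ _
  rw [lePair_mk]
  dsimp only
  exact and_congr (forall_congr' fun i => not_congr (lePair_swap _ _).1)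
    (forall_congr' fun j => not_congr (lePair_swap _ _).1)

theorem le_iff_forall_lf {x y : PGame.{u}} :
    x ≤ y ↔ (∀ i, x.moveLeft i ⧏ y) ∧ ∀ j, x ⧏ y.moveRight j := by
  cases x; cases y; exact le_mk_iff _ _ _ _

theorem le_of_forall_lf {x y : PGame.{u}} (h₁ : ∀ i, x.moveLeft i ⧏ y)
    (h₂ : ∀ j, x ⧏ y.moveRight j) : x ≤ y :=
  le_iff_forall_lf.2 ⟨h₁, h₂⟩

theorem lf_iff_exists_le {x y : PGame.{u}} :
    x ⧏ y ↔ (∃ i, x ≤ y.moveLeft i) ∨ ∃ j, x.moveRight j ≤ y := by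
  show ¬ y ≤ x ↔ _
  rw [le_iff_forall_lf]
  simp only [LF, not_and_or, not_forall, not_not]

theorem lf_of_le_moveLeft {x y : PGame.{u}} {i : y.LeftMoves} (h : x ≤ y.moveLeft i) : x ⧏ y :=
  lf_iff_exists_le.2 (Or.inl ⟨i, h⟩)

theorem lf_of_moveRight_le {x y : PGame.{u}} {j : x.RightMoves} (h : x.moveRight j ≤ y) :
    x ⧏ y :=
  lf_iff_exists_le.2 (Or.inr ⟨j, h⟩)

theorem pg_le_refl (x : PGame.{u}) : x ≤ x := by
  induction x with
  | mk l r L R IHl IHr =>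
    exact le_of_forall_lf (fun i => lf_of_le_moveLeft (i := i) (IHl i))
      (fun j => lf_of_moveRight_le (j := j) (IHr j))

theorem pg_le_trans_aux {x y z : PGame.{u}}
    (h₁ : ∀ {i}, y ≤ z → z ≤ x.moveLeft i → y ≤ x.moveLeft i)
    (h₂ : ∀ {j}, z.moveRight j ≤ x → x ≤ y → z.moveRight j ≤ y) (hxy : x ≤ y) (hyz : y ≤ z) :
    x ≤ z :=
  le_of_forall_lf (fun i h => (le_iff_forall_lf.1 hxy).1 i (h₁ hyz h))
    fun j h => (le_iff_forall_lf.1 hyz).2 j (h₂ h hxy)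

theorem pg_le_trans3 (x : PGame.{u}) : ∀ y z : PGame.{u},
    (x ≤ y → y ≤ z → x ≤ z) ∧ (y ≤ z → z ≤ x → y ≤ x) ∧ (z ≤ x → x ≤ y → z ≤ y) := by
  induction x with
  | mk xl xr xL xR IHxl IHxr =>
  intro y
  induction y with
  | mk yl yr yL yR IHyl IHyr =>
  intro z
  induction z with
  | mk zl zr zL zR IHzl IHzr =>
  exact ⟨pg_le_trans_aux (fun {i} => (IHxl i _ _).2.1) fun {j} => (IHzr j).2.2,
    pg_le_trans_aux (fun {i} => (IHyl i _).2.2) fun {j} => (IHxr j _ _).1,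
    pg_le_trans_aux (fun {i} => (IHzl i).1) fun {j} => (IHyr j _).2.1⟩

instance : Preorder PGame.{u} where
  le x y := x ≤ y
  lt x y := x < y
  le_refl := pg_le_refl
  le_trans x y z := (pg_le_trans3 x y z).1
  lt_iff_le_not_ge _ _ := Iff.rfl

instance : HasEquiv PGame.{u} := ⟨fun x y => x ≤ y ∧ y ≤ x⟩

theorem equiv_rfl' {x : PGame.{u}} : x ≈ x := ⟨le_refl x, le_refl x⟩

theorem equiv_symm' {x y : PGame.{u}} (h : x ≈ y) : y ≈ x := ⟨h.2, h.1⟩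

theorem equiv_trans' {x y z : PGame.{u}} (h₁ : x ≈ y) (h₂ : y ≈ z) : x ≈ z :=
  ⟨h₁.1.trans h₂.1, h₂.2.trans h₁.2⟩

theorem moveLeft_lf {x : PGame.{u}} (i : x.LeftMoves) : x.moveLeft i ⧏ x :=
  (le_iff_forall_lf.1 (le_refl x)).1 i

theorem lf_moveRight {x : PGame.{u}} (j : x.RightMoves) : x ⧏ x.moveRight j :=
  (le_iff_forall_lf.1 (le_refl x)).2 j

theorem lf_of_lf_of_le {x y z : PGame.{u}} (h : x ⧏ y) (h' : y ≤ z) : x ⧏ z :=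
  fun hzx => h (h'.trans hzx)

theorem lf_of_le_of_lf {x y z : PGame.{u}} (h : x ≤ y) (h' : y ⧏ z) : x ⧏ z :=
  fun hzx => h' (hzx.trans h)

theorem equiv_of_forall {x y : PGame.{u}}
    (hl₁ : ∀ i, ∃ j, x.moveLeft i ≈ y.moveLeft j) (hl₂ : ∀ j, ∃ i, x.moveLeft i ≈ y.moveLeft j)
    (hr₁ : ∀ i, ∃ j, x.moveRight i ≈ y.moveRight j)
    (hr₂ : ∀ j, ∃ i, x.moveRight i ≈ y.moveRight j) : x ≈ y := by
  refine ⟨le_of_forall_lf ?_ ?_, le_of_forall_lf ?_ ?_⟩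
  · intro i; obtain ⟨j, hj⟩ := hl₁ i; exact lf_of_le_moveLeft hj.1
  · intro j; obtain ⟨i, hi⟩ := hr₂ j; exact lf_of_moveRight_le hi.1
  · intro j; obtain ⟨i, hi⟩ := hl₂ j; exact lf_of_le_moveLeft hi.2
  · intro i; obtain ⟨j, hj⟩ := hr₁ i; exact lf_of_moveRight_le hj.2

/-- Immediate options. -/
inductive IsOption : PGame.{u} → PGame.{u} → Prop
  | moveLeft {x : PGame.{u}} (i : x.LeftMoves) : IsOption (x.moveLeft i) x
  | moveRight {x : PGame.{u}} (i : x.RightMoves) : IsOption (x.moveRight i) x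

theorem wf_isOption : WellFounded IsOption.{u} :=
  ⟨fun x => by
    induction x with
    | mk l r L R IHl IHr =>
      refine ⟨_, fun y h => ?_⟩
      cases h with
      | moveLeft i => exact IHl i
      | moveRight j => exact IHr j⟩

instance : WellFoundedRelation PGame.{u} :=
  ⟨Relation.TransGen IsOption, wf_isOption.transGen⟩

def toLeftMovesAdd {x y : PGame.{u}} : x.LeftMoves ⊕ y.LeftMoves ≃ (x + y).LeftMoves := by
  cases x; cases y; exact Equiv.refl _

def toRightMovesAdd {x y : PGame.{u}} : x.RightMoves ⊕ y.RightMoves ≃ (x + y).RightMoves := by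
  cases x; cases y; exact Equiv.refl _

theorem add_moveLeft_inl {x y : PGame.{u}} (i : x.LeftMoves) :
    (x + y).moveLeft (toLeftMovesAdd (Sum.inl i)) = x.moveLeft i + y := by
  cases x; cases y; rfl

theorem add_moveLeft_inr {x y : PGame.{u}} (i : y.LeftMoves) :
    (x + y).moveLeft (toLeftMovesAdd (Sum.inr i)) = x + y.moveLeft i := by
  cases x; cases y; rfl

theorem add_moveRight_inl {x y : PGame.{u}} (i : x.RightMoves) :
    (x + y).moveRight (toRightMovesAdd (Sum.inl i)) = x.moveRight i + y := by
  cases x; cases y; rfl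

theorem add_moveRight_inr {x y : PGame.{u}} (i : y.RightMoves) :
    (x + y).moveRight (toRightMovesAdd (Sum.inr i)) = x + y.moveRight i := by
  cases x; cases y; rfl

theorem leftMoves_add_cases {x y : PGame.{u}} (k : (x + y).LeftMoves)
    {P : (x + y).LeftMoves → Prop} (hl : ∀ i, P (toLeftMovesAdd (Sum.inl i)))
    (hr : ∀ i, P (toLeftMovesAdd (Sum.inr i))) : P k := by
  obtain ⟨s, rfl⟩ := (toLeftMovesAdd (x := x) (y := y)).surjective k
  rcases s with i | i
  · exact hl i
  · exact hr i

theorem rightMoves_add_cases {x y : PGame.{u}} (k : (x + y).RightMoves)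
    {P : (x + y).RightMoves → Prop} (hl : ∀ i, P (toRightMovesAdd (Sum.inl i)))
    (hr : ∀ i, P (toRightMovesAdd (Sum.inr i))) : P k := by
  obtain ⟨s, rfl⟩ := (toRightMovesAdd (x := x) (y := y)).surjective k
  rcases s with i | i
  · exact hl i
  · exact hr i

theorem add_le_lf_aux (x : PGame.{u}) : ∀ y z : PGame.{u},
    (x ≤ y → x + z ≤ y + z) ∧ (x ⧏ y → x + z ⧏ y + z) := by
  induction x with
  | mk xl xr xL xR IHxl IHxr =>
  intro y
  induction y with
  | mk yl yr yL yR IHyl IHyr =>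
  intro z
  induction z with
  | mk zl zr zL zR IHzl IHzr =>
  constructor
  · intro h
    have h' := le_iff_forall_lf.1 h
    apply le_of_forall_lf
    · rintro (i | k)
      · exact (IHxl i _ _).2 (h'.1 i)
      · exact lf_of_le_moveLeft (i := Sum.inr k) ((IHzl k).1 h)
    · rintro (j | k)
      · exact (IHyr j _).2 (h'.2 j)
      · exact lf_of_moveRight_le (j := Sum.inr k) ((IHzr k).1 h)
  · intro h
    rcases lf_iff_exists_le.1 h with ⟨i, hi⟩ | ⟨j, hj⟩
    · exact lf_of_le_moveLeft (i := Sum.inl i) ((IHyl i _).1 hi)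
    · exact lf_of_moveRight_le (j := Sum.inl j) ((IHxr j _ _).1 hj)

theorem add_le_add_right_pg {x y : PGame.{u}} (z : PGame.{u}) (h : x ≤ y) : x + z ≤ y + z :=
  (add_le_lf_aux x y z).1 h

theorem add_comm_equiv (x : PGame.{u}) : ∀ y : PGame.{u}, x + y ≈ y + x := by
  induction x with
  | mk xl xr xL xR IHxl IHxr =>
  intro y
  induction y with
  | mk yl yr yL yR IHyl IHyr =>
  refine equiv_of_forall ?_ ?_ ?_ ?_
  · rintro (i | j)
    · exact ⟨Sum.inr i, IHxl i _⟩
    · exact ⟨Sum.inl j, IHyl j⟩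
  · rintro (j | i)
    · exact ⟨Sum.inr j, IHyl j⟩
    · exact ⟨Sum.inl i, IHxl i _⟩
  · rintro (i | j)
    · exact ⟨Sum.inr i, IHxr i _⟩
    · exact ⟨Sum.inl j, IHyr j⟩
  · rintro (j | i)
    · exact ⟨Sum.inr j, IHyr j⟩
    · exact ⟨Sum.inl i, IHxr i _⟩

theorem add_le_add_left_pg {x y : PGame.{u}} (z : PGame.{u}) (h : x ≤ y) : z + x ≤ z + y :=
  (add_comm_equiv z x).1.trans ((add_le_add_right_pg z h).trans (add_comm_equiv y z).1)

theorem add_congr_pg {a b c d : PGame.{u}} (h₁ : a ≈ b) (h₂ : c ≈ d) : a + c ≈ b + d :=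
  ⟨(add_le_add_right_pg c h₁.1).trans (add_le_add_left_pg b h₂.1),
    (add_le_add_right_pg d h₁.2).trans (add_le_add_left_pg a h₂.2)⟩

theorem add_zero_equiv (x : PGame.{u}) : x + 0 ≈ x := by
  induction x with
  | mk xl xr xL xR IHxl IHxr =>
  refine equiv_of_forall ?_ ?_ ?_ ?_
  · rintro (i | i)
    · exact ⟨i, IHxl i⟩
    · exact PEmpty.elim i
  · intro j; exact ⟨Sum.inl j, IHxl j⟩
  · rintro (i | i)
    · exact ⟨i, IHxr i⟩
    · exact PEmpty.elim i
  · intro j; exact ⟨Sum.inl j, IHxr j⟩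

theorem zero_add_equiv (x : PGame.{u}) : 0 + x ≈ x :=
  equiv_trans' (add_comm_equiv 0 x) (add_zero_equiv x)

theorem add_assoc_equiv (x : PGame.{u}) : ∀ y z : PGame.{u}, x + y + z ≈ x + (y + z) := by
  induction x with
  | mk xl xr xL xR IHxl IHxr =>
  intro y
  induction y with
  | mk yl yr yL yR IHyl IHyr =>
  intro z
  induction z with
  | mk zl zr zL zR IHzl IHzr =>
  refine equiv_of_forall ?_ ?_ ?_ ?_
  · rintro ((i | j) | k)
    · exact ⟨Sum.inl i, IHxl i _ _⟩
    · exact ⟨Sum.inr (Sum.inl j), IHyl j _⟩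
    · exact ⟨Sum.inr (Sum.inr k), IHzl k⟩
  · rintro (i | j | k)
    · exact ⟨Sum.inl (Sum.inl i), IHxl i _ _⟩
    · exact ⟨Sum.inl (Sum.inr j), IHyl j _⟩
    · exact ⟨Sum.inr k, IHzl k⟩
  · rintro ((i | j) | k)
    · exact ⟨Sum.inl i, IHxr i _ _⟩
    · exact ⟨Sum.inr (Sum.inl j), IHyr j _⟩
    · exact ⟨Sum.inr (Sum.inr k), IHzr k⟩
  · rintro (i | j | k)
    · exact ⟨Sum.inl (Sum.inl i), IHxr i _ _⟩
    · exact ⟨Sum.inl (Sum.inr j), IHyr j _⟩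
    · exact ⟨Sum.inr k, IHzr k⟩

theorem neg_le_lf_aux (x : PGame.{u}) : ∀ y : PGame.{u},
    (x ≤ y → -y ≤ -x) ∧ (x ⧏ y → -y ⧏ -x) := by
  induction x with
  | mk xl xr xL xR IHxl IHxr =>
  intro y
  induction y with
  | mk yl yr yL yR IHyl IHyr =>
  constructor
  · intro h
    have h' := le_iff_forall_lf.1 h
    apply le_of_forall_lf
    · intro j
      exact (IHyr j).2 (h'.2 j)
    · intro i
      exact (IHxl i _).2 (h'.1 i)
  · intro h
    rcases lf_iff_exists_le.1 h with ⟨i, hi⟩ | ⟨j, hj⟩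
    · exact lf_of_moveRight_le (x := -mk yl yr yL yR) (j := i) ((IHyl i).1 hi)
    · exact lf_of_le_moveLeft (y := -mk xl xr xL xR) (i := j) ((IHxr j _).1 hj)

theorem neg_congr_pg {x y : PGame.{u}} (h : x ≈ y) : -x ≈ -y :=
  ⟨(neg_le_lf_aux y x).1 h.2, (neg_le_lf_aux x y).1 h.1⟩

theorem add_neg_aux (x : PGame.{u}) : x + -x ≤ 0 ∧ 0 ≤ x + -x := by
  induction x with
  | mk xl xr xL xR IHxl IHxr =>
  constructor
  · apply le_of_forall_lf
    · rintro (i | j)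
      · show xL i + -mk xl xr xL xR ⧏ 0
        refine lf_of_moveRight_le (j := toRightMovesAdd (x := xL i) (y := -mk xl xr xL xR) (Sum.inr i)) ?_
        erw [add_moveRight_inr]
        exact (IHxl i).1
      · show mk xl xr xL xR + -xR j ⧏ 0
        refine lf_of_moveRight_le (j := toRightMovesAdd (x := mk xl xr xL xR) (y := -xR j) (Sum.inl j)) ?_
        erw [add_moveRight_inl]
        exact (IHxr j).1
    · intro j; exact PEmpty.elim j
  · apply le_of_forall_lf
    · intro i; exact PEmpty.elim i
    · rintro (j | i)
      · show (0 : PGame) ⧏ xR j + -mk xl xr xL xR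
        refine lf_of_le_moveLeft (i := toLeftMovesAdd (x := xR j) (y := -mk xl xr xL xR) (Sum.inr j)) ?_
        erw [add_moveLeft_inr]
        exact (IHxr j).2
      · show (0 : PGame) ⧏ mk xl xr xL xR + -xL i
        refine lf_of_le_moveLeft (i := toLeftMovesAdd (x := mk xl xr xL xR) (y := -xL i) (Sum.inl i)) ?_
        erw [add_moveLeft_inl]
        exact (IHxl i).2

theorem eqvGen_equiv {x y : PGame.{u}}
    (h : Relation.EqvGen (fun x y : PGame.{u} => x ≤ y ∧ y ≤ x) x y) : x ≈ y := by
  induction h with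
  | rel _ _ h => exact h
  | refl x => exact equiv_rfl'
  | symm _ _ _ ih => exact equiv_symm' ih
  | trans _ _ _ _ _ ih1 ih2 => exact equiv_trans' ih1 ih2

theorem game_eq {x y : PGame.{u}} (h : x ≈ y) : (⟦x⟧ : Game.{u}) = ⟦y⟧ :=
  Quotient.sound (Relation.EqvGen.rel _ _ h)

theorem equiv_iff_game_eq {x y : PGame.{u}} : x ≈ y ↔ (⟦x⟧ : Game.{u}) = ⟦y⟧ :=
  ⟨game_eq, fun h => eqvGen_equiv (Quotient.exact h)⟩

theorem mk_out_equiv (x : PGame.{u}) : (⟦x⟧ : Game.{u}).out ≈ x :=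
  eqvGen_equiv (Quotient.mk_out x)

theorem quot_add (a b : PGame.{u}) : (⟦a + b⟧ : Game.{u}) = ⟦a⟧ + ⟦b⟧ :=
  game_eq (add_congr_pg (equiv_symm' (mk_out_equiv a)) (equiv_symm' (mk_out_equiv b)))

theorem quot_neg (a : PGame.{u}) : (⟦-a⟧ : Game.{u}) = -⟦a⟧ :=
  game_eq (neg_congr_pg (equiv_symm' (mk_out_equiv a)))

theorem quot_sub (a b : PGame.{u}) : (⟦a - b⟧ : Game.{u}) = ⟦a⟧ - ⟦b⟧ :=
  game_eq (add_congr_pg (equiv_symm' (mk_out_equiv a))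
    (neg_congr_pg (equiv_symm' (mk_out_equiv b))))

@[simp] theorem quot_zero : (⟦0⟧ : Game.{u}) = 0 := rfl

theorem game_add_assoc (a b c : Game.{u}) : a + b + c = a + (b + c) :=
  Quotient.inductionOn₃ a b c fun x y z => by
    simp only [← quot_add]; exact game_eq (add_assoc_equiv x y z)

theorem game_add_comm (a b : Game.{u}) : a + b = b + a :=
  Quotient.inductionOn₂ a b fun x y => by
    simp only [← quot_add]; exact game_eq (add_comm_equiv x y)

theorem game_add_zero (a : Game.{u}) : a + 0 = a :=
  Quotient.inductionOn a fun x => by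
    rw [← quot_zero, ← quot_add]; exact game_eq (add_zero_equiv x)

theorem game_zero_add (a : Game.{u}) : 0 + a = a :=
  Quotient.inductionOn a fun x => by
    rw [← quot_zero, ← quot_add]; exact game_eq (zero_add_equiv x)

theorem game_neg_add_cancel (a : Game.{u}) : -a + a = 0 :=
  Quotient.inductionOn a fun x => by
    rw [← quot_neg, ← quot_add, ← quot_zero]
    exact game_eq (equiv_trans' (add_comm_equiv _ _) (add_neg_aux x))

theorem game_sub_eq_add_neg (a b : Game.{u}) : a - b = a + -b :=
  Quotient.inductionOn₂ a b fun x y => by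
    rw [← quot_sub, ← quot_neg, ← quot_add]; rfl

instance : AddCommGroup Game.{u} where
  add := Add.add
  add_assoc := game_add_assoc
  zero := Zero.zero
  zero_add := game_zero_add
  add_zero := game_add_zero
  nsmul := nsmulRec
  neg := Neg.neg
  sub := Sub.sub
  sub_eq_add_neg := game_sub_eq_add_neg
  zsmul := zsmulRec
  neg_add_cancel := game_neg_add_cancel
  add_comm := game_add_comm

theorem le_iff_game_le {x y : PGame.{u}} : x ≤ y ↔ (⟦x⟧ : Game.{u}) ≤ ⟦y⟧ := by
  refine ⟨fun h => Relation.TransGen.single (Or.inl h), fun h => ?_⟩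
  have h' := Quotient.le_def.1 h
  clear h
  induction h' with
  | single hs => exact hs.elim id (fun h'' => (eqvGen_equiv h'').1)
  | tail _ hs ih => exact ih.trans (hs.elim id (fun h'' => (eqvGen_equiv h'').1))

instance : PartialOrder Game.{u} :=
  { (inferInstance : Preorder Game.{u}) with
    le_antisymm := fun a b => Quotient.inductionOn₂ a b fun _ _ h₁ h₂ =>
      game_eq ⟨le_iff_game_le.2 h₁, le_iff_game_le.2 h₂⟩ }

theorem game_add_le_add_left (a b : Game.{u}) (h : a ≤ b) (c : Game.{u}) : a + c ≤ b + c := by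
  induction a using Quotient.inductionOn with | h x =>
  induction b using Quotient.inductionOn with | h y =>
  induction c using Quotient.inductionOn with | h z =>
  rw [← quot_add, ← quot_add]
  exact le_iff_game_le.1 (add_le_add_right_pg z (le_iff_game_le.2 h))

instance : IsOrderedAddMonoid Game.{u} where
  add_le_add_left := game_add_le_add_left

instance : One Game.{u} := ⟨⟦1⟧⟩

theorem powHalf_moveLeft (n : ℕ) (i : (powHalf.{u} n).LeftMoves) : (powHalf n).moveLeft i = 0 := by
  cases n <;> rfl

theorem powHalf_succ_moveRight (n : ℕ) (i : (powHalf.{u} (n + 1)).RightMoves) :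
    (powHalf (n + 1)).moveRight i = powHalf n :=
  rfl

instance (n : ℕ) : Inhabited (powHalf.{u} n).LeftMoves := by
  cases n <;> exact ⟨PUnit.unit⟩

instance (n : ℕ) : Inhabited (powHalf.{u} (n + 1)).RightMoves := ⟨PUnit.unit⟩

theorem zero_lf_powHalf (n : ℕ) : (0 : PGame.{u}) ⧏ powHalf n :=
  lf_of_le_moveLeft (i := (default : (powHalf.{u} n).LeftMoves))
    (le_of_eq (powHalf_moveLeft n _).symm)

theorem zero_le_powHalf : ∀ n : ℕ, (0 : PGame.{u}) ≤ powHalf n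
  | 0 => le_of_forall_lf (fun i => PEmpty.elim i) (fun j => PEmpty.elim j)
  | n + 1 => le_of_forall_lf (fun i => PEmpty.elim i) (fun _ => zero_lf_powHalf n)

theorem powHalf_succ_le_powHalf : ∀ n : ℕ, powHalf.{u} (n + 1) ≤ powHalf n
  | 0 => le_of_forall_lf (fun _ => zero_lf_powHalf 0) (fun j => PEmpty.elim j)
  | n + 1 => le_of_forall_lf (fun _ => zero_lf_powHalf (n + 1))
      (fun _ => lf_of_moveRight_le (x := powHalf (n + 2)) (j := PUnit.unit)
        (powHalf_succ_le_powHalf n))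

theorem lf_add_powHalf (x : PGame.{u}) (n : ℕ) : x ⧏ x + powHalf n := by
  intro h
  have h' : (⟦x⟧ : Game.{u}) + ⟦powHalf n⟧ ≤ ⟦x⟧ := by
    rw [← quot_add]; exact le_iff_game_le.1 h
  exact zero_lf_powHalf n (le_iff_game_le.2 ((add_le_iff_nonpos_right _).1 h'))

theorem powHalf_le_add_self (n : ℕ) : powHalf.{u} n ≤ powHalf (n + 1) + powHalf (n + 1) := by
  apply le_of_forall_lf
  · intro i
    rw [powHalf_moveLeft]
    exact lf_of_le_moveLeft (y := powHalf (n + 1) + powHalf (n + 1)) (i := Sum.inl PUnit.unit)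
      ((zero_le_powHalf (n + 1)).trans (zero_add_equiv _).2)
  · rintro (j | j)
    · exact lf_add_powHalf (powHalf n) (n + 1)
    · exact lf_of_lf_of_le (lf_add_powHalf (powHalf n) (n + 1)) (add_comm_equiv _ _).1

theorem add_self_le_powHalf (n : ℕ)
    (hR : ∀ j, powHalf.{u} (n + 1) + powHalf (n + 1) ⧏ (powHalf n).moveRight j) :
    powHalf.{u} (n + 1) + powHalf (n + 1) ≤ powHalf n := by
  apply le_of_forall_lf _ hR
  rintro (i | i)
  · show 0 + powHalf (n + 1) ⧏ powHalf n
    exact lf_of_le_of_lf (zero_add_equiv _).1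
      (lf_of_moveRight_le (x := powHalf (n + 1)) (j := PUnit.unit) (le_refl (powHalf n)))
  · show powHalf (n + 1) + 0 ⧏ powHalf n
    exact lf_of_le_of_lf (add_zero_equiv _).1
      (lf_of_moveRight_le (x := powHalf (n + 1)) (j := PUnit.unit) (le_refl (powHalf n)))

theorem add_powHalf_succ_self_eq_powHalf (n : ℕ) :
    powHalf.{u} (n + 1) + powHalf (n + 1) ≈ powHalf n := by
  induction n with
  | zero => exact ⟨add_self_le_powHalf 0 (fun j => PEmpty.elim j), powHalf_le_add_self 0⟩
  | succ k ih =>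
    refine ⟨add_self_le_powHalf (k + 1) (fun _ => ?_), powHalf_le_add_self (k + 1)⟩
    exact lf_of_moveRight_le (x := powHalf (k + 2) + powHalf (k + 2)) (j := Sum.inl PUnit.unit)
      ((add_le_add_left_pg (powHalf (k + 1)) (powHalf_succ_le_powHalf (k + 1))).trans ih.1)

end SetTheory.PGame

-- infra
theorem EquivDom.equiv {a b : PGame} (h : EquivDom a b) : a ≈ b := by
  obtain ⟨h1, h2, h3, h4⟩ := h
  constructor
  · exact le_of_forall_lf (fun i => (h1 i).elim fun j hj => lf_of_le_moveLeft hj)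
      (fun j => (h4 j).elim fun i hi => lf_of_moveRight_le hi)
  · exact le_of_forall_lf (fun j => (h2 j).elim fun i hi => lf_of_le_moveLeft hi)
      (fun i => (h3 i).elim fun j hj => lf_of_moveRight_le hj)

theorem ordinalSum_mk (G : PGame.{u}) {yl yr : Type u} (yL : yl → PGame.{u}) (yR : yr → PGame.{u}) :
    ordinalSum G ⟨yl, yr, yL, yR⟩ =
      ⟨G.LeftMoves ⊕ yl, G.RightMoves ⊕ yr,
       Sum.elim G.moveLeft fun j => ordinalSum G (yL j),
       Sum.elim G.moveRight fun j => ordinalSum G (yR j)⟩ := by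
  rw [ordinalSum]

theorem lf_ordinalSum_of_moveRight_le {G K H : PGame.{u}} {j : K.RightMoves}
    (h : ordinalSum G (K.moveRight j) ≤ H) : ordinalSum G K ⧏ H := by
  cases K with
  | mk c d P Q =>
    rw [ordinalSum_mk]
    exact lf_of_moveRight_le (j := Sum.inr j) h

theorem lf_ordinalSum_of_le_moveLeft {G K H : PGame.{u}} {i : K.LeftMoves}
    (h : H ≤ ordinalSum G (K.moveLeft i)) : H ⧏ ordinalSum G K := by
  cases K with
  | mk c d P Q =>
    rw [ordinalSum_mk]
    exact lf_of_le_moveLeft (i := Sum.inr i) h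

theorem colon (G : PGame.{u}) : ∀ H₁ H₂ : PGame.{u}, H₁ ≤ H₂ → ordinalSum G H₁ ≤ ordinalSum G H₂
  | mk a₁ b₁ L₁ R₁, mk a₂ b₂ L₂ R₂, h => by
    rw [ordinalSum_mk, ordinalSum_mk]
    apply le_of_forall_lf
    · rintro (i | j)
      · exact lf_of_le_moveLeft (i := Sum.inl i) le_rfl
      · show ordinalSum G (L₁ j) ⧏ _
        rw [← ordinalSum_mk]
        have hj : L₁ j ⧏ mk a₂ b₂ L₂ R₂ :=
          lf_of_lf_of_le (moveLeft_lf (x := mk a₁ b₁ L₁ R₁) j) h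
        rcases lf_iff_exists_le.1 hj with ⟨i2, h2⟩ | ⟨j2, h2⟩
        · exact lf_ordinalSum_of_le_moveLeft (i := i2) (colon G _ _ h2)
        · exact lf_ordinalSum_of_moveRight_le (j := j2) (colon G _ _ h2)
    · rintro (i | j)
      · exact lf_of_moveRight_le (j := Sum.inl i) le_rfl
      · show _ ⧏ ordinalSum G (R₂ j)
        rw [← ordinalSum_mk]
        have hj : mk a₁ b₁ L₁ R₁ ⧏ R₂ j :=
          lf_of_le_of_lf h (lf_moveRight (x := mk a₂ b₂ L₂ R₂) j)
        rcases lf_iff_exists_le.1 hj with ⟨i2, h2⟩ | ⟨j2, h2⟩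
        · exact lf_ordinalSum_of_le_moveLeft (i := i2) (colon G _ _ h2)
        · exact lf_ordinalSum_of_moveRight_le (j := j2) (colon G _ _ h2)
  termination_by H₁ H₂ => (H₁, H₂)
  decreasing_by
    · exact Prod.Lex.left _ _ (Relation.TransGen.single (IsOption.moveLeft (x := mk a₁ b₁ L₁ R₁) j))
    · exact Prod.Lex.left _ _ (Relation.TransGen.head (IsOption.moveRight j2)
        (Relation.TransGen.single (IsOption.moveLeft (x := mk a₁ b₁ L₁ R₁) j)))
    · exact Prod.Lex.right _ (Relation.TransGen.head (IsOption.moveLeft i2)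
        (Relation.TransGen.single (IsOption.moveRight (x := mk a₂ b₂ L₂ R₂) j)))
    · exact Prod.Lex.left _ _ (Relation.TransGen.single (IsOption.moveRight (x := mk a₁ b₁ L₁ R₁) j2))

theorem dG_two (i : ℕ) : (⟦powHalf (i + 1)⟧ : Game) + ⟦powHalf (i + 1)⟧ = ⟦powHalf i⟧ := by
  rw [← quot_add]
  exact game_eq (add_powHalf_succ_self_eq_powHalf i)

theorem dG_nonneg (i : ℕ) : (0 : Game) ≤ ⟦powHalf i⟧ :=
  le_iff_game_le.mp (zero_le_powHalf i)

theorem dG_succ_le (i : ℕ) : (⟦powHalf (i + 1)⟧ : Game) ≤ ⟦powHalf i⟧ :=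
  le_iff_game_le.mp (powHalf_succ_le_powHalf i)

theorem dG_mono {i j : ℕ} (h : i ≤ j) : (⟦powHalf j⟧ : Game) ≤ ⟦powHalf i⟧ := by
  induction j with
  | zero => simp_all
  | succ j ih =>
    rcases Nat.lt_or_ge i (j+1) with h' | h'
    · exact (dG_succ_le j).trans (ih (Nat.lt_succ_iff.mp h'))
    · have : i = j + 1 := le_antisymm h h'
      subst this; exact le_rfl

theorem dG_scale (t i : ℕ) : (2 ^ t) • (⟦powHalf (i + t)⟧ : Game) = ⟦powHalf i⟧ := by
  induction t with
  | zero => simp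
  | succ t ih =>
    rw [pow_succ, mul_smul]
    calc (2 ^ t) • (2 • (⟦powHalf (i + t + 1)⟧ : Game))
        = (2 ^ t) • (⟦powHalf (i + t)⟧ : Game) := by rw [two_nsmul, dG_two]
      _ = ⟦powHalf i⟧ := ih

theorem S1 (U V : PGame) (u : Game) (s : ℕ)
    (hU : (⟦U⟧ : Game) = u)
    (hV : (⟦V⟧ : Game) = u + ⟦powHalf s⟧)
    (hL : ∀ i, (⟦U.moveLeft i⟧ : Game) + ⟦powHalf s⟧ ≤ u)
    (hR : ∀ i, u + ⟦powHalf s⟧ ≤ (⟦U.moveRight i⟧ : Game)) :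
    (⟦ball U V⟧ : Game) = u + ⟦powHalf (s + 1)⟧ := by
  have key : EquivDom (ball U V) (U + powHalf (s + 1)) := by
    refine ⟨?_, ?_, ?_, ?_⟩
    · intro i
      refine ⟨toLeftMovesAdd (Sum.inr default), ?_⟩
      rw [add_moveLeft_inr, powHalf_moveLeft]
      exact (add_zero_equiv U).2
    · intro j
      refine ⟨PUnit.unit, ?_⟩
      apply leftMoves_add_cases j
      · intro i
        rw [add_moveLeft_inl]
        show U.moveLeft i + powHalf (s + 1) ≤ U
        rw [le_iff_game_le, quot_add]
        calc (⟦U.moveLeft i⟧ : Game) + ⟦powHalf (s + 1)⟧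
            ≤ ⟦U.moveLeft i⟧ + ⟦powHalf s⟧ := add_le_add_right (dG_succ_le s) _
          _ ≤ u := hL i
          _ = ⟦U⟧ := hU.symm
      · intro i
        rw [add_moveLeft_inr, powHalf_moveLeft]
        exact (add_zero_equiv U).1
    · intro i
      refine ⟨toRightMovesAdd (Sum.inr default), ?_⟩
      rw [add_moveRight_inr, powHalf_succ_moveRight]
      show U + powHalf s ≤ V
      rw [le_iff_game_le, quot_add, hV, hU]
    · intro j
      refine ⟨PUnit.unit, ?_⟩
      apply rightMoves_add_cases j
      · intro i
        rw [add_moveRight_inl]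
        show V ≤ U.moveRight i + powHalf (s + 1)
        rw [le_iff_game_le, quot_add, hV]
        calc u + (⟦powHalf s⟧ : Game) ≤ ⟦U.moveRight i⟧ := hR i
          _ ≤ ⟦U.moveRight i⟧ + ⟦powHalf (s + 1)⟧ := le_add_of_nonneg_right (dG_nonneg _)
      · intro i
        rw [add_moveRight_inr, powHalf_succ_moveRight]
        show V ≤ U + powHalf s
        rw [le_iff_game_le, quot_add, hV, hU]
  calc (⟦ball U V⟧ : Game) = ⟦U + powHalf (s + 1)⟧ := game_eq key.equiv
    _ = u + ⟦powHalf (s + 1)⟧ := by rw [quot_add, hU]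

theorem S2 (x y A B WA WB : PGame) (p s : ℕ) (wa : Game)
    (hl : (⟦ball x y⟧ : Game) - ⟦x⟧ = ⟦powHalf p⟧)
    (hr : (⟦y⟧ : Game) - ⟦ball x y⟧ = ⟦powHalf p⟧)
    (hWA : (⟦WA⟧ : Game) = wa)
    (hWB : (⟦WB⟧ : Game) = wa + ⟦powHalf s⟧)
    (h1 : (⟦ordinalSum (ball x y) A⟧ : Game) = ⟦ball x y⟧ + wa)
    (h2 : (⟦ordinalSum (ball x y) B⟧ : Game) = ⟦ball x y⟧ + (wa + ⟦powHalf s⟧))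
    (hwm : (⟦ball WA WB⟧ : Game) = wa + ⟦powHalf (s + 1)⟧)
    (h8 : 0 ≤ wa) (h9 : wa + ⟦powHalf s⟧ ≤ ⟦powHalf p⟧) (h10 : p ≤ s) :
    (⟦ordinalSum (ball x y) (ball A B)⟧ : Game) = ⟦ball x y⟧ + (wa + ⟦powHalf (s + 1)⟧) := by
  have hx : (⟦x⟧ : Game) = ⟦ball x y⟧ - ⟦powHalf p⟧ := by rw [← hl]; abel
  have hy : (⟦y⟧ : Game) = ⟦ball x y⟧ + ⟦powHalf p⟧ := by rw [← hr]; abel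
  have wm0 : (0 : Game) ≤ wa + ⟦powHalf (s + 1)⟧ := add_nonneg h8 (dG_nonneg _)
  have key : EquivDom (ordinalSum (ball x y) (ball A B)) (ball x y + ball WA WB) := by
    refine ⟨?_, ?_, ?_, ?_⟩
    · rintro (i | i)
      · refine ⟨toLeftMovesAdd (Sum.inl PUnit.unit), ?_⟩
        erw [add_moveLeft_inl]
        show x ≤ x + ball WA WB
        rw [le_iff_game_le, quot_add, hwm]
        exact le_add_of_nonneg_right wm0
      · refine ⟨toLeftMovesAdd (Sum.inr PUnit.unit), ?_⟩
        erw [add_moveLeft_inr]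
        show ordinalSum (ball x y) A ≤ ball x y + WA
        rw [le_iff_game_le, quot_add, hWA, h1]
    · intro j
      apply leftMoves_add_cases j
      · intro i
        refine ⟨Sum.inr PUnit.unit, ?_⟩
        rw [add_moveLeft_inl]
        show x + ball WA WB ≤ ordinalSum (ball x y) A
        rw [le_iff_game_le, quot_add, hwm, hx, h1]
        have hd : (⟦powHalf (s + 1)⟧ : Game) ≤ ⟦powHalf p⟧ := dG_mono (by omega)
        calc ⟦ball x y⟧ - ⟦powHalf p⟧ + (wa + ⟦powHalf (s + 1)⟧)
            = ⟦ball x y⟧ + wa + (⟦powHalf (s + 1)⟧ - ⟦powHalf p⟧) := by abel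
          _ ≤ ⟦ball x y⟧ + wa + 0 := add_le_add_right (sub_nonpos.mpr hd) _
          _ = ⟦ball x y⟧ + wa := add_zero _
      · intro i
        refine ⟨Sum.inr PUnit.unit, ?_⟩
        rw [add_moveLeft_inr]
        show ball x y + WA ≤ ordinalSum (ball x y) A
        rw [le_iff_game_le, quot_add, hWA, h1]
    · rintro (i | i)
      · refine ⟨toRightMovesAdd (Sum.inr PUnit.unit), ?_⟩
        erw [add_moveRight_inr]
        show ball x y + WB ≤ y
        rw [le_iff_game_le, quot_add, hWB, hy]
        exact add_le_add_right h9 _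
      · refine ⟨toRightMovesAdd (Sum.inr PUnit.unit), ?_⟩
        erw [add_moveRight_inr]
        show ball x y + WB ≤ ordinalSum (ball x y) B
        rw [le_iff_game_le, quot_add, hWB, h2]
    · intro j
      apply rightMoves_add_cases j
      · intro i
        refine ⟨Sum.inl PUnit.unit, ?_⟩
        rw [add_moveRight_inl]
        show y ≤ y + ball WA WB
        rw [le_iff_game_le, quot_add, hwm]
        exact le_add_of_nonneg_right wm0
      · intro i
        refine ⟨Sum.inr PUnit.unit, ?_⟩
        rw [add_moveRight_inr]
        show ordinalSum (ball x y) B ≤ ball x y + WB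
        rw [le_iff_game_le, quot_add, hWB, h2]
  calc (⟦ordinalSum (ball x y) (ball A B)⟧ : Game) = ⟦ball x y + ball WA WB⟧ :=
        game_eq key.equiv
    _ = ⟦ball x y⟧ + (wa + ⟦powHalf (s + 1)⟧) := by rw [quot_add, hwm]

theorem S2int (x y A WA : PGame) (p : ℕ) (wa wm : Game)
    (hl : (⟦ball x y⟧ : Game) - ⟦x⟧ = ⟦powHalf p⟧)
    (hr : (⟦y⟧ : Game) - ⟦ball x y⟧ = ⟦powHalf p⟧)
    (hWA : (⟦WA⟧ : Game) = wa)
    (h1 : (⟦ordinalSum (ball x y) A⟧ : Game) = ⟦ball x y⟧ + wa)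
    (hwm : (⟦ball WA (powHalf p)⟧ : Game) = wm)
    (h0 : (0 : Game) ≤ wm) (hwa : wm ≤ wa + ⟦powHalf p⟧) :
    (⟦ordinalSum (ball x y) (PGame.mk PUnit PEmpty (fun _ => A) PEmpty.elim)⟧ : Game) =
      ⟦ball x y⟧ + wm := by
  have hx : (⟦x⟧ : Game) = ⟦ball x y⟧ - ⟦powHalf p⟧ := by rw [← hl]; abel
  have hy : (⟦y⟧ : Game) = ⟦ball x y⟧ + ⟦powHalf p⟧ := by rw [← hr]; abel
  have key : EquivDom (ordinalSum (ball x y) (PGame.mk PUnit PEmpty (fun _ => A) PEmpty.elim))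
      (ball x y + ball WA (powHalf p)) := by
    refine ⟨?_, ?_, ?_, ?_⟩
    · rintro (i | i)
      · refine ⟨toLeftMovesAdd (Sum.inl PUnit.unit), ?_⟩
        erw [add_moveLeft_inl]
        show x ≤ x + ball WA (powHalf p)
        rw [le_iff_game_le, quot_add, hwm]
        exact le_add_of_nonneg_right h0
      · refine ⟨toLeftMovesAdd (Sum.inr PUnit.unit), ?_⟩
        erw [add_moveLeft_inr]
        show ordinalSum (ball x y) A ≤ ball x y + WA
        rw [le_iff_game_le, quot_add, hWA, h1]
    · intro j
      apply leftMoves_add_cases j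
      · intro i
        refine ⟨Sum.inr PUnit.unit, ?_⟩
        rw [add_moveLeft_inl]
        show x + ball WA (powHalf p) ≤ ordinalSum (ball x y) A
        rw [le_iff_game_le, quot_add, hwm, hx, h1]
        calc ⟦ball x y⟧ - ⟦powHalf p⟧ + wm
            = ⟦ball x y⟧ + (wm - ⟦powHalf p⟧) := by abel
          _ ≤ ⟦ball x y⟧ + wa := add_le_add_right (sub_le_iff_le_add.mpr hwa) _
      · intro i
        refine ⟨Sum.inr PUnit.unit, ?_⟩
        rw [add_moveLeft_inr]
        show ball x y + WA ≤ ordinalSum (ball x y) A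
        rw [le_iff_game_le, quot_add, hWA, h1]
    · rintro (i | i)
      · refine ⟨toRightMovesAdd (Sum.inr PUnit.unit), ?_⟩
        erw [add_moveRight_inr]
        show ball x y + powHalf p ≤ y
        rw [le_iff_game_le, quot_add, hy]
      · exact i.elim
    · intro j
      apply rightMoves_add_cases j
      · intro i
        refine ⟨Sum.inl PUnit.unit, ?_⟩
        rw [add_moveRight_inl]
        show y ≤ y + ball WA (powHalf p)
        rw [le_iff_game_le, quot_add, hwm]
        exact le_add_of_nonneg_right h0
      · intro i
        refine ⟨Sum.inl PUnit.unit, ?_⟩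
        rw [add_moveRight_inr]
        show y ≤ ball x y + powHalf p
        rw [le_iff_game_le, quot_add, hy]
  calc (⟦ordinalSum (ball x y) (PGame.mk PUnit PEmpty (fun _ => A) PEmpty.elim)⟧ : Game)
      = ⟦ball x y + ball WA (powHalf p)⟧ := game_eq key.equiv
    _ = ⟦ball x y⟧ + wm := by rw [quot_add, hwm]

def canonNat_rightMoves_elim {C : Sort*} : ∀ (m : ℕ) (i : (canonNat.{u} m).RightMoves), C
  | 0, i => i.elim
  | _ + 1, i => i.elim

theorem canonNat_good : ∀ m : ℕ, (⟦canonNat.{u} m⟧ : Game.{u}) = m • (1 : Game.{u}) ∧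
    (∀ i, (⟦(canonNat.{u} m).moveLeft i⟧ : Game.{u}) + 1 ≤ m • (1 : Game.{u}))
  | 0 => ⟨by simp [canonNat], fun i => i.elim⟩
  | m + 1 => by
    obtain ⟨ih1, ih2⟩ := canonNat_good m
    have key : EquivDom (canonNat (m + 1)) (canonNat m + 1) := by
      refine ⟨?_, ?_, ?_, ?_⟩
      · intro i
        refine ⟨toLeftMovesAdd (Sum.inr PUnit.unit), ?_⟩
        erw [add_moveLeft_inr]
        show canonNat m ≤ canonNat m + 0
        exact (add_zero_equiv _).2
      · intro j
        apply leftMoves_add_cases j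
        · intro i
          refine ⟨PUnit.unit, ?_⟩
          rw [add_moveLeft_inl]
          show (canonNat m).moveLeft i + 1 ≤ canonNat m
          rw [le_iff_game_le, quot_add, ih1]
          exact ih2 i
        · intro i
          refine ⟨PUnit.unit, ?_⟩
          rw [add_moveLeft_inr]
          show canonNat m + 0 ≤ canonNat m
          exact (add_zero_equiv _).1
      · exact fun i => i.elim
      · intro j
        apply rightMoves_add_cases j
        · exact fun i => canonNat_rightMoves_elim m i
        · exact fun i => i.elim
    constructor
    · calc (⟦canonNat (m + 1)⟧ : Game) = ⟦canonNat m + 1⟧ := game_eq key.equiv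
        _ = m • (1 : Game) + 1 := by rw [quot_add, ih1]; rfl
        _ = (m + 1) • (1 : Game) := (succ_nsmul 1 m).symm
    · intro i
      show (⟦canonNat m⟧ : Game) + 1 ≤ (m + 1) • (1 : Game)
      rw [ih1, succ_nsmul]

def Wnat (p : ℕ) : ℕ → PGame
  | 0 => 0
  | m + 1 => ball (Wnat p m) (powHalf p)

theorem Wnat_good (p : ℕ) : ∀ m : ℕ,
    (⟦Wnat.{u} p m⟧ : Game.{u}) = ⟦powHalf p⟧ - ⟦powHalf (p + m)⟧ ∧
    (∀ i, (⟦(Wnat.{u} p m).moveLeft i⟧ : Game.{u}) + ⟦powHalf (p + m)⟧ ≤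
      ⟦powHalf p⟧ - ⟦powHalf (p + m)⟧) ∧
    (∀ i, (⟦powHalf.{u} p⟧ : Game.{u}) - ⟦powHalf (p + m)⟧ + ⟦powHalf (p + m)⟧ ≤
      ⟦(Wnat.{u} p m).moveRight i⟧)
  | 0 => ⟨by simp [Wnat], fun i => i.elim, fun i => i.elim⟩
  | m + 1 => by
    obtain ⟨ih1, ih2, ih3⟩ := Wnat_good p m
    have hval : (⟦ball (Wnat p m) (powHalf p)⟧ : Game) =
        (⟦powHalf p⟧ - ⟦powHalf (p + m)⟧) + ⟦powHalf (p + m + 1)⟧ := by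
      refine S1 _ _ _ (p + m) ih1 ?_ ih2 ih3
      abel
    have hval' : (⟦ball (Wnat p m) (powHalf p)⟧ : Game) =
        ⟦powHalf p⟧ - ⟦powHalf (p + (m + 1))⟧ := by
      rw [hval]
      have h2 := dG_two (p + m)
      show _ = ⟦powHalf p⟧ - ⟦powHalf ((p + m) + 1)⟧
      rw [← h2]; abel
    refine ⟨hval', ?_, ?_⟩
    · intro i
      show (⟦Wnat p m⟧ : Game) + ⟦powHalf (p + (m + 1))⟧ ≤ _
      rw [ih1, ← hval', hval]
      exact le_of_eq rfl
    · intro i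
      show (⟦powHalf p⟧ : Game) - ⟦powHalf (p + (m + 1))⟧ + ⟦powHalf (p + (m + 1))⟧ ≤
        ⟦powHalf p⟧
      exact le_of_eq (by abel)

theorem ordinalSum_zero_equiv (G : PGame) : ordinalSum G (canonNat 0) ≈ G := by
  have : EquivDom (ordinalSum G (canonNat 0)) G := by
    refine ⟨?_, ?_, ?_, ?_⟩
    · rintro (i | i)
      · exact ⟨i, le_rfl⟩
      · exact i.elim
    · exact fun j => ⟨Sum.inl j, le_rfl⟩
    · rintro (i | i)
      · exact ⟨i, le_rfl⟩
      · exact i.elim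
    · exact fun j => ⟨Sum.inl j, le_rfl⟩
  exact this.equiv

theorem osInt (x y : PGame) (p : ℕ)
    (hl : (⟦ball x y⟧ : Game) - ⟦x⟧ = ⟦powHalf p⟧)
    (hr : (⟦y⟧ : Game) - ⟦ball x y⟧ = ⟦powHalf p⟧) :
    ∀ m : ℕ, (⟦ordinalSum (ball x y) (canonNat m)⟧ : Game) =
      ⟦ball x y⟧ + (⟦powHalf p⟧ - ⟦powHalf (p + m)⟧)
  | 0 => by
    rw [game_eq (ordinalSum_zero_equiv (ball x y))]
    simp
  | m + 1 => by
    have ih := osInt x y p hl hr m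
    have hwm : (⟦ball (Wnat p m) (powHalf p)⟧ : Game) =
        ⟦powHalf p⟧ - ⟦powHalf (p + (m + 1))⟧ := (Wnat_good p (m + 1)).1
    have h0 : (0 : Game) ≤ ⟦powHalf p⟧ - ⟦powHalf (p + (m + 1))⟧ :=
      sub_nonneg.mpr (dG_mono (by omega))
    have hwa : (⟦powHalf p⟧ : Game) - ⟦powHalf (p + (m + 1))⟧ ≤
        (⟦powHalf p⟧ - ⟦powHalf (p + m)⟧) + ⟦powHalf p⟧ := by
      calc (⟦powHalf p⟧ : Game) - ⟦powHalf (p + (m + 1))⟧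
          ≤ ⟦powHalf p⟧ := sub_le_self _ (dG_nonneg _)
        _ = (⟦powHalf p⟧ - ⟦powHalf (p + m)⟧) + ⟦powHalf (p + m)⟧ := by abel
        _ ≤ (⟦powHalf p⟧ - ⟦powHalf (p + m)⟧) + ⟦powHalf p⟧ :=
            add_le_add_right (dG_mono (by omega)) _
    exact S2int x y (canonNat m) (Wnat p m) p _ _ hl hr (Wnat_good p m).1 ih hwm h0 hwa

def frac : ℕ → ℕ → PGame.{u} → PGame.{u} → PGame.{u}
  | 0, _, A, B => ball A B
  | q + 1, a, A, B =>
    if a < 2 ^ (q + 1) then frac q a A (ball A B) else frac q (a - 2 ^ (q + 1)) (ball A B) B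

theorem FRAC (x y : PGame.{u}) (p : ℕ)
    (hl : (⟦ball x y⟧ : Game) - ⟦x⟧ = ⟦powHalf p⟧)
    (hr : (⟦y⟧ : Game) - ⟦ball x y⟧ = ⟦powHalf p⟧) (q : ℕ) :
    ∀ (a : ℕ) (A B WA WB : PGame.{u}) (s t : ℕ) (ua wa : Game.{u}),
    Odd a → 0 < a → a < 2 ^ (q + 1) → p ≤ s →
    (⟦A⟧ : Game) = ua →
    (⟦B⟧ : Game) = ua + ⟦powHalf t⟧ →
    (∀ i, (⟦A.moveLeft i⟧ : Game) + ⟦powHalf t⟧ ≤ ua) →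
    (∀ i, ua + (⟦powHalf t⟧ : Game) ≤ ⟦A.moveRight i⟧) →
    (⟦WA⟧ : Game) = wa →
    (⟦WB⟧ : Game) = wa + ⟦powHalf s⟧ →
    (∀ i, (⟦WA.moveLeft i⟧ : Game) + ⟦powHalf s⟧ ≤ wa) →
    (∀ i, wa + (⟦powHalf s⟧ : Game) ≤ ⟦WA.moveRight i⟧) →
    (0 : Game) ≤ wa → wa + ⟦powHalf s⟧ ≤ ⟦powHalf p⟧ →
    (⟦ordinalSum (ball x y) A⟧ : Game) = ⟦ball x y⟧ + wa →
    (⟦ordinalSum (ball x y) B⟧ : Game) = ⟦ball x y⟧ + (wa + ⟦powHalf s⟧) →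
    (⟦frac q a A B⟧ : Game) = ua + a • ⟦powHalf (t + q + 1)⟧ ∧
    (⟦ordinalSum (ball x y) (frac q a A B)⟧ : Game) =
      ⟦ball x y⟧ + wa + a • ⟦powHalf (s + q + 1)⟧ := by
  induction q with
  | zero =>
    intro a A B WA WB s t ua wa hodd hapos haq hps hA hB hAL hAR hWA hWB hWL hWR hwa0 hwap h1 h2
    have ha1 : a = 1 := by
      obtain ⟨k, hk⟩ := hodd; omega
    subst ha1
    have hM1 : (⟦ball A B⟧ : Game) = ua + ⟦powHalf (t + 1)⟧ := S1 A B ua t hA hB hAL hAR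
    have hWM : (⟦ball WA WB⟧ : Game) = wa + ⟦powHalf (s + 1)⟧ := S1 WA WB wa s hWA hWB hWL hWR
    have hOSM := S2 x y A B WA WB p s wa hl hr hWA hWB h1 h2 hWM hwa0 hwap hps
    constructor
    · show (⟦ball A B⟧ : Game) = _
      rw [hM1, one_nsmul]
    · show (⟦ordinalSum (ball x y) (ball A B)⟧ : Game) = _
      rw [hOSM, one_nsmul, add_assoc]
  | succ q ih =>
    intro a A B WA WB s t ua wa hodd hapos haq hps hA hB hAL hAR hWA hWB hWL hWR hwa0 hwap h1 h2
    have hM1 : (⟦ball A B⟧ : Game) = ua + ⟦powHalf (t + 1)⟧ := S1 A B ua t hA hB hAL hAR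
    have hWM : (⟦ball WA WB⟧ : Game) = wa + ⟦powHalf (s + 1)⟧ := S1 WA WB wa s hWA hWB hWL hWR
    have hOSM := S2 x y A B WA WB p s wa hl hr hWA hWB h1 h2 hWM hwa0 hwap hps
    have hALw : ∀ i, (⟦A.moveLeft i⟧ : Game) + ⟦powHalf (t + 1)⟧ ≤ ua := fun i =>
      ((add_le_add_right (dG_succ_le t) _).trans (hAL i))
    have hARw : ∀ i, ua + (⟦powHalf (t + 1)⟧ : Game) ≤ ⟦A.moveRight i⟧ := fun i =>
      (add_le_add_right (dG_succ_le t) _).trans (hAR i)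
    have hWLw : ∀ i, (⟦WA.moveLeft i⟧ : Game) + ⟦powHalf (s + 1)⟧ ≤ wa := fun i =>
      (add_le_add_right (dG_succ_le s) _).trans (hWL i)
    have hWRw : ∀ i, wa + (⟦powHalf (s + 1)⟧ : Game) ≤ ⟦WA.moveRight i⟧ := fun i =>
      (add_le_add_right (dG_succ_le s) _).trans (hWR i)
    by_cases hsplit : a < 2 ^ (q + 1)
    · have hfr : frac (q + 1) a A B = frac q a A (ball A B) := by
        rw [frac, if_pos hsplit]
      have res := ih a A (ball A B) WA (ball WA WB) (s + 1) (t + 1) ua wa hodd hapos hsplit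
        (by omega) hA hM1 hALw hARw hWA hWM hWLw hWRw hwa0
        ((add_le_add_right (dG_succ_le s) _).trans hwap) h1 hOSM
      have e1 : t + 1 + q + 1 = t + (q + 1) + 1 := by omega
      have e2 : s + 1 + q + 1 = s + (q + 1) + 1 := by omega
      rw [hfr]
      rw [e1, e2] at res
      exact res
    · have hge : 2 ^ (q + 1) ≤ a := by omega
      have hfr : frac (q + 1) a A B = frac q (a - 2 ^ (q + 1)) (ball A B) B := by
        rw [frac, if_neg hsplit]
      have heven : (2 ^ (q + 1)) % 2 = 0 := by
        have : 2 ^ (q + 1) = 2 * 2 ^ q := by ring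
        omega
      have hamod : a % 2 = 1 := Nat.odd_iff.mp hodd
      have hodd' : Odd (a - 2 ^ (q + 1)) := by
        rw [Nat.odd_iff]; omega
      have hapos' : 0 < a - 2 ^ (q + 1) := by omega
      have haq' : a - 2 ^ (q + 1) < 2 ^ (q + 1) := by
        have : 2 ^ (q + 1 + 1) = 2 * 2 ^ (q + 1) := by ring
        omega
      have hB' : (⟦B⟧ : Game) = (ua + ⟦powHalf (t + 1)⟧) + ⟦powHalf (t + 1)⟧ := by
        rw [hB, ← dG_two t]; abel
      have hWB' : (⟦WB⟧ : Game) = (wa + ⟦powHalf (s + 1)⟧) + ⟦powHalf (s + 1)⟧ := by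
        rw [hWB, ← dG_two s]; abel
      have hML : ∀ i, (⟦(ball A B).moveLeft i⟧ : Game) + ⟦powHalf (t + 1)⟧ ≤
          ua + ⟦powHalf (t + 1)⟧ := fun i => le_of_eq (by rw [show (ball A B).moveLeft i = A from rfl, hA])
      have hMR : ∀ i, (ua + (⟦powHalf (t + 1)⟧ : Game)) + ⟦powHalf (t + 1)⟧ ≤
          ⟦(ball A B).moveRight i⟧ := fun i =>
        le_of_eq (by rw [show (ball A B).moveRight i = B from rfl, hB'])
      have hWML : ∀ i, (⟦(ball WA WB).moveLeft i⟧ : Game) + ⟦powHalf (s + 1)⟧ ≤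
          wa + ⟦powHalf (s + 1)⟧ := fun i =>
        le_of_eq (by rw [show (ball WA WB).moveLeft i = WA from rfl, hWA])
      have hWMR : ∀ i, (wa + (⟦powHalf (s + 1)⟧ : Game)) + ⟦powHalf (s + 1)⟧ ≤
          ⟦(ball WA WB).moveRight i⟧ := fun i =>
        le_of_eq (by rw [show (ball WA WB).moveRight i = WB from rfl, hWB'])
      have hwa0' : (0 : Game) ≤ wa + ⟦powHalf (s + 1)⟧ := add_nonneg hwa0 (dG_nonneg _)
      have hwap' : (wa + (⟦powHalf (s + 1)⟧ : Game)) + ⟦powHalf (s + 1)⟧ ≤ ⟦powHalf p⟧ := by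
        refine le_trans (le_of_eq ?_) hwap
        rw [← dG_two s]; abel
      have h2' : (⟦ordinalSum (ball x y) B⟧ : Game) =
          ⟦ball x y⟧ + ((wa + ⟦powHalf (s + 1)⟧) + ⟦powHalf (s + 1)⟧) := by
        rw [h2]; congr 1; rw [← dG_two s]; abel
      have res := ih (a - 2 ^ (q + 1)) (ball A B) B (ball WA WB) WB (s + 1) (t + 1)
        (ua + ⟦powHalf (t + 1)⟧) (wa + ⟦powHalf (s + 1)⟧) hodd' hapos' haq' (by omega)
        hM1 hB' hML hMR hWM hWB' hWML hWMR hwa0' hwap' hOSM h2'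
      obtain ⟨r1, r2⟩ := res
      rw [hfr]
      have e1 : t + 1 + q + 1 = t + q + 2 := by omega
      have e2 : s + 1 + q + 1 = s + q + 2 := by omega
      have e3 : t + (q + 1) + 1 = t + q + 2 := by omega
      have e4 : s + (q + 1) + 1 = s + q + 2 := by omega
      rw [e1] at r1; rw [e2] at r2; rw [e3, e4]
      have hsc : ∀ i : ℕ, (⟦powHalf (i + 1)⟧ : Game) = 2 ^ (q + 1) • ⟦powHalf (i + q + 2)⟧ := by
        intro i
        have := dG_scale (q + 1) (i + 1)
        have e : i + 1 + (q + 1) = i + q + 2 := by omega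
        rw [e] at this
        exact this.symm
      constructor
      · rw [r1, hsc t, add_assoc, ← add_nsmul, Nat.add_sub_cancel' hge]
      · rw [r2, hsc s, ← add_assoc (⟦ball x y⟧ : Game) wa, add_assoc (⟦ball x y⟧ + wa),
          ← add_nsmul, Nat.add_sub_cancel' hge]

/-- Balanced Ordinal Sum Theorem.  Let `G ≅ ⟨x | y⟩` be a balanced ball of numbers of
radius `1/2^p` (so `G − x = y − G = 1/2^p` as values, with midpoint `n` the value of
`G`).  For integers `m, q ≥ 0` and `a` either `0` or odd with `0 < a < 2^q`, with
`m + a/2^q > 0`, and any number `H` of value `m + a/2^q`: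
`G : H = n + 1/2^p − 1/2^{p+m} + a/2^{p+m+q+1}`. -/
theorem balanced_ordinalSum (x y : PGame) (hx : x.Numeric) (hy : y.Numeric)
    (hG : (ball x y).Numeric) (p : ℕ)
    (hl : (⟦ball x y⟧ : Game) - ⟦x⟧ = ⟦powHalf p⟧)
    (hr : (⟦y⟧ : Game) - ⟦ball x y⟧ = ⟦powHalf p⟧)
    (m q a : ℕ) (ha : a = 0 ∨ (Odd a ∧ 0 < a ∧ a < 2 ^ q))
    (hpos : 0 < (m : ℚ) + (a : ℚ) / 2 ^ q)
    (H : PGame) (hH : H.Numeric)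
    (hHval : (⟦H⟧ : Game) = dyadicVal m 0 + dyadicVal a q) :
    (⟦ordinalSum (ball x y) H⟧ : Game) =
      ⟦ball x y⟧ + ⟦powHalf p⟧ - ⟦powHalf (p + m)⟧ + dyadicVal a (p + m + q + 1) := by
  have hcolon : ∀ K : PGame, (⟦H⟧ : Game) = ⟦K⟧ →
      (⟦ordinalSum (ball x y) H⟧ : Game) = ⟦ordinalSum (ball x y) K⟧ := by
    intro K hK
    have he : H ≈ K := equiv_iff_game_eq.mpr hK
    exact game_eq ⟨colon _ _ _ he.1, colon _ _ _ he.2⟩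
  have d0 : (⟦powHalf 0⟧ : Game) = 1 := rfl
  have hdm : dyadicVal (m : ℤ) 0 = m • (1 : Game) := by
    rw [dyadicVal, natCast_zsmul, d0]
  rcases ha with rfl | ⟨hodd, hapos, haq⟩
  · have hz : dyadicVal ((0 : ℕ) : ℤ) q = 0 := by simp [dyadicVal]
    have hz' : dyadicVal ((0 : ℕ) : ℤ) (p + m + q + 1) = 0 := by simp [dyadicVal]
    have hH0 : (⟦H⟧ : Game) = ⟦canonNat m⟧ := by
      rw [hHval, hz, hdm, add_zero, (canonNat_good m).1]
    rw [hcolon _ hH0, osInt x y p hl hr m, hz', add_zero]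
    abel
  · have hq1 : 1 ≤ q := by
      rcases Nat.eq_zero_or_pos q with h | h
      · subst h; simp at haq; omega
      · exact h
    obtain ⟨q', rfl⟩ : ∃ q', q = q' + 1 := ⟨q - 1, by omega⟩
    set n : Game := ⟦ball x y⟧ with hn
    have hA := (canonNat_good m).1
    have hB : (⟦canonNat (m + 1)⟧ : Game) = m • (1 : Game) + ⟦powHalf 0⟧ := by
      rw [(canonNat_good (m + 1)).1, succ_nsmul, d0]
    have hAL : ∀ i, (⟦(canonNat m).moveLeft i⟧ : Game) + ⟦powHalf 0⟧ ≤ m • (1 : Game) := by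
      intro i; rw [d0]; exact (canonNat_good m).2 i
    have hAR : ∀ i, m • (1 : Game) + (⟦powHalf 0⟧ : Game) ≤ ⟦(canonNat m).moveRight i⟧ :=
      fun i => canonNat_rightMoves_elim m i
    have hWA := (Wnat_good p m).1
    have hsplit : (⟦powHalf p⟧ : Game) - ⟦powHalf (p + m)⟧ + ⟦powHalf (p + m + 1)⟧ =
        ⟦powHalf p⟧ - ⟦powHalf (p + m + 1)⟧ := by
      rw [← dG_two (p + m)]; abel
    have hWB : (⟦Wnat p (m + 1)⟧ : Game) =
        (⟦powHalf p⟧ - ⟦powHalf (p + m)⟧) + ⟦powHalf (p + m + 1)⟧ := by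
      rw [(Wnat_good p (m + 1)).1, hsplit]
      rfl
    have hWL : ∀ i, (⟦(Wnat p m).moveLeft i⟧ : Game) + ⟦powHalf (p + m + 1)⟧ ≤
        ⟦powHalf p⟧ - ⟦powHalf (p + m)⟧ := fun i =>
      (add_le_add_right (dG_succ_le (p + m)) _).trans ((Wnat_good p m).2.1 i)
    have hWR : ∀ i, (⟦powHalf p⟧ : Game) - ⟦powHalf (p + m)⟧ + ⟦powHalf (p + m + 1)⟧ ≤
        ⟦(Wnat p m).moveRight i⟧ := fun i =>
      (add_le_add_right (dG_succ_le (p + m)) _).trans ((Wnat_good p m).2.2 i)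
    have hwa0 : (0 : Game) ≤ ⟦powHalf p⟧ - ⟦powHalf (p + m)⟧ :=
      sub_nonneg.mpr (dG_mono (by omega))
    have hwap : (⟦powHalf p⟧ : Game) - ⟦powHalf (p + m)⟧ + ⟦powHalf (p + m + 1)⟧ ≤
        ⟦powHalf p⟧ := by
      rw [hsplit]; exact sub_le_self _ (dG_nonneg _)
    have h1 := osInt x y p hl hr m
    have h2 : (⟦ordinalSum (ball x y) (canonNat (m + 1))⟧ : Game) =
        ⟦ball x y⟧ + ((⟦powHalf p⟧ - ⟦powHalf (p + m)⟧) + ⟦powHalf (p + m + 1)⟧) := by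
      rw [osInt x y p hl hr (m + 1), hsplit]
      rfl
    have res := FRAC x y p hl hr q' a (canonNat m) (canonNat (m + 1)) (Wnat p m)
      (Wnat p (m + 1)) (p + m + 1) 0 (m • (1 : Game)) (⟦powHalf p⟧ - ⟦powHalf (p + m)⟧)
      hodd hapos haq (by omega) hA hB hAL hAR hWA hWB hWL hWR hwa0 hwap h1 h2
    obtain ⟨r1, r2⟩ := res
    have e0 : 0 + q' + 1 = q' + 1 := by omega
    rw [e0] at r1
    have hHK : (⟦H⟧ : Game) = ⟦frac q' a (canonNat m) (canonNat (m + 1))⟧ := by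
      rw [hHval, hdm, r1, dyadicVal, natCast_zsmul]
    rw [hcolon _ hHK, r2, dyadicVal, natCast_zsmul]
    have e : p + m + 1 + q' + 1 = p + m + (q' + 1) + 1 := by omega
    rw [e]
    rw [show (n + (⟦powHalf p⟧ - ⟦powHalf (p + m)⟧) : Game) =
      n + ⟦powHalf p⟧ - ⟦powHalf (p + m)⟧ from by abel]
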